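/- Let v ≥ 0, V > 0, ω > 0. Suppose x_lf, y_lf, x_hf, y_hf, θ : ℝ → ℝ are differentiable functions and u_lf, u_hf : ℝ → ℝ are functions satisfying, for all t: ẋ_lf = v sin u_lf, ẏ_lf = v cos u_lf, ẋ_hf = V sin θ, ẏ_hf = V cos θ, θ̇ = ω u_hf. Define the relative state x(t) := cos θ(t)·(x_lf(t) − x_hf(t)) − sin θ(t)·(y_lf(t) − y_hf(t)) and y(t) := sin θ(t)·(x_lf(t) − x_hf(t)) + cos θ(t)·(y_lf(t) − y_hf(t)). Then for all t: ẋ(t) = −y(t) ω u_hf(t) + v sin(u_lf(t) − θ(t)) and ẏ(t) = x(t) ω u_hf(t) + v cos(u_lf(t) − θ(t)) − V. -/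

import Mathlib

/-- Derivation of the relative dynamics (equation (13)) of the homicidal-chauffeur
system: in the frame rotated by the tracker's heading `θ`, the relative position
`(x, y)` satisfies `ẋ = −y ω u_hf + v sin(u_lf − θ)` and
`ẏ = x ω u_hf + v cos(u_lf − θ) − V`. -/
theorem stmt_13 (v V ω : ℝ) (hv : 0 ≤ v) (hV : 0 < V) (hω : 0 < ω)
    (xlf ylf xhf yhf θ : ℝ → ℝ) (ulf uhf : ℝ → ℝ)
    (hxlf : ∀ t, HasDerivAt xlf (v * Real.sin (ulf t)) t)
    (hylf : ∀ t, HasDerivAt ylf (v * Real.cos (ulf t)) t)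
    (hxhf : ∀ t, HasDerivAt xhf (V * Real.sin (θ t)) t)
    (hyhf : ∀ t, HasDerivAt yhf (V * Real.cos (θ t)) t)
    (hθ : ∀ t, HasDerivAt θ (ω * uhf t) t) :
    (∀ t, HasDerivAt
      (fun s => Real.cos (θ s) * (xlf s - xhf s) - Real.sin (θ s) * (ylf s - yhf s))
      (-(Real.sin (θ t) * (xlf t - xhf t) + Real.cos (θ t) * (ylf t - yhf t)) * ω * uhf t
        + v * Real.sin (ulf t - θ t)) t)
    ∧ (∀ t, HasDerivAt
      (fun s => Real.sin (θ s) * (xlf s - xhf s) + Real.cos (θ s) * (ylf s - yhf s))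
      ((Real.cos (θ t) * (xlf t - xhf t) - Real.sin (θ t) * (ylf t - yhf t)) * ω * uhf t
        + v * Real.cos (ulf t - θ t) - V) t) := by

  have key : ∀ t,
      HasDerivAt (fun s => Real.cos (θ s)) (-Real.sin (θ t) * (ω * uhf t)) t ∧
      HasDerivAt (fun s => Real.sin (θ s)) (Real.cos (θ t) * (ω * uhf t)) t ∧
      HasDerivAt (fun s => xlf s - xhf s) (v * Real.sin (ulf t) - V * Real.sin (θ t)) t ∧
      HasDerivAt (fun s => ylf s - yhf s) (v * Real.cos (ulf t) - V * Real.cos (θ t)) t := by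
    intro t
    exact ⟨(Real.hasDerivAt_cos (θ t)).comp t (hθ t),
      (Real.hasDerivAt_sin (θ t)).comp t (hθ t),
      (hxlf t).sub (hxhf t), (hylf t).sub (hyhf t)⟩
  constructor <;> intro t <;> obtain ⟨hc, hs, hx, hy⟩ := key t
  · refine ((hc.mul hx).sub (hs.mul hy)).congr_deriv (Eq.symm ?_)
    have e1 := Real.sin_sub (ulf t) (θ t)
    have e3 := Real.sin_sq_add_cos_sq (θ t)
    linear_combination v * e1
  · refine ((hs.mul hx).add (hc.mul hy)).congr_deriv (Eq.symm ?_)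
    have e2 := Real.cos_sub (ulf t) (θ t)
    have e3 := Real.sin_sq_add_cos_sq (θ t)
    linear_combination v * e2 + V * e3
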